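/- Assume X_A and X_B are conditionally independent given Y, the prior is well-defined, and f is a differentiable convex function with f(1)=0 whose derivative f' is injective. If reporting strategies ŝ_A : Σ_A → Δ_Σ and ŝ_B : Σ_B → Δ_Σ satisfy Pay(ŝ_A, ŝ_B) = MI^f(X_A;X_B), then there exists a permutation π of Σ such that Pr[Y=π(y)] = Pr[Y=y], ŝ_A(x_A)(π(y)) = Pr[Y=y|X_A=x_A] and ŝ_B(x_B)(π(y)) = Pr[Y=y|X_B=x_B] for all x_A, x_B, y. -/

import Mathlib

noncomputable section

variable {SA SB S : Type*}

/-- Joint probability `Pr[X_A = a, X_B = b]` induced by the joint pmf `ν` of `(X_A, X_B, Y)`. -/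
def jAB [Fintype S] (ν : SA → SB → S → ℝ) (a : SA) (b : SB) : ℝ := ∑ y, ν a b y

/-- Joint probability `Pr[X_A = a, Y = y]`. -/
def jAY [Fintype SB] (ν : SA → SB → S → ℝ) (a : SA) (y : S) : ℝ := ∑ b, ν a b y

/-- Joint probability `Pr[X_B = b, Y = y]`. -/
def jBY [Fintype SA] (ν : SA → SB → S → ℝ) (b : SB) (y : S) : ℝ := ∑ a, ν a b y

/-- Marginal probability `Pr[X_A = a]`. -/
def prA [Fintype SB] [Fintype S] (ν : SA → SB → S → ℝ) (a : SA) : ℝ := ∑ b, ∑ y, ν a b y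

/-- Marginal probability `Pr[X_B = b]`. -/
def prB [Fintype SA] [Fintype S] (ν : SA → SB → S → ℝ) (b : SB) : ℝ := ∑ a, ∑ y, ν a b y

/-- Marginal probability `Pr[Y = y]`. -/
def prY [Fintype SA] [Fintype SB] (ν : SA → SB → S → ℝ) (y : S) : ℝ := ∑ a, ∑ b, ν a b y

/-- Pointwise mutual information `K(a,b) = Pr[a,b]/(Pr[a]·Pr[b])`. -/
def K [Fintype SA] [Fintype SB] [Fintype S] (ν : SA → SB → S → ℝ) (a : SA) (b : SB) : ℝ :=
  jAB ν a b / (prA ν a * prB ν b)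

/-- Conditional probability `Pr[Y = y | X_A = a]`. -/
def condA [Fintype SB] [Fintype S] (ν : SA → SB → S → ℝ) (a : SA) (y : S) : ℝ :=
  jAY ν a y / prA ν a

/-- Conditional probability `Pr[Y = y | X_B = b]`. -/
def condB [Fintype SA] [Fintype S] (ν : SA → SB → S → ℝ) (b : SB) (y : S) : ℝ :=
  jBY ν b y / prB ν b

/-- `X_A` and `X_B` are conditionally independent given `Y`:
`Pr[a, b | y] = Pr[a | y] · Pr[b | y]` for all `a, b, y`. -/
def CondIndep [Fintype SA] [Fintype SB] (ν : SA → SB → S → ℝ) : Prop :=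
  ∀ a b y, ν a b y / prY ν y = (jAY ν a y / prY ν y) * (jBY ν b y / prY ν y)

/-- `ν` is a probability mass function. -/
def IsPMF [Fintype SA] [Fintype SB] [Fintype S] (ν : SA → SB → S → ℝ) : Prop :=
  (∀ a b y, 0 ≤ ν a b y) ∧ ∑ a, ∑ b, ∑ y, ν a b y = 1

/-- `p` is a probability vector: nonnegative entries summing to `1`. -/
def IsProbVec {T : Type*} [Fintype T] (p : T → ℝ) : Prop := (∀ t, 0 ≤ p t) ∧ ∑ t, p t = 1

/-- The convex conjugate `f*(x) = sup_t (t·x − f(t))`, as a real-valued supremum. -/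
def fconj (f : ℝ → ℝ) (x : ℝ) : ℝ := sSup (Set.range fun t => t * x - f t)

/-- `c` is a subgradient of `f` at `t`: `f(s) ≥ f(t) + c·(s − t)` for all `s`. -/
def IsSubgradientAt (f : ℝ → ℝ) (t c : ℝ) : Prop := ∀ s : ℝ, f t + c * (s - t) ≤ f s

/-- The f-mutual information `MI^f(X_A;X_B) = Σ_{a,b} Pr[a]·Pr[b]·f(K(a,b))`. -/
def MIf [Fintype SA] [Fintype SB] [Fintype S] (f : ℝ → ℝ) (ν : SA → SB → S → ℝ) : ℝ :=
  ∑ a, ∑ b, prA ν a * prB ν b * f (K ν a b)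

/-- The agreement `g(a,b) = Σ_y h_A(a)(y)·h_B(b)(y)/p(y)`. -/
def gagr [Fintype S] (hA : SA → S → ℝ) (hB : SB → S → ℝ) (p : S → ℝ) (a : SA) (b : SB) : ℝ :=
  ∑ y, hA a y * hB b y / p y

/-- Expected `f`-mutual information gain
`MIG^f(h_A,h_B,p) = Σ Pr[a,b]·f'(g(a,b)) − Σ Pr[a]·Pr[b]·f*(f'(g(a,b)))`. -/
def MIG [Fintype SA] [Fintype SB] [Fintype S] (f : ℝ → ℝ) (ν : SA → SB → S → ℝ)
    (hA : SA → S → ℝ) (hB : SB → S → ℝ) (p : S → ℝ) : ℝ :=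
  ∑ a, ∑ b, jAB ν a b * deriv f (gagr hA hB p a b)
    - ∑ a, ∑ b, prA ν a * prB ν b * fconj f (deriv f (gagr hA hB p a b))

/-- Each agent's expected payment in the multi-task common ground mechanism `MCG(f)`. -/
def Pay [Fintype SA] [Fintype SB] [Fintype S] (f : ℝ → ℝ) (ν : SA → SB → S → ℝ)
    (sA : SA → S → ℝ) (sB : SB → S → ℝ) : ℝ :=
  MIG f ν sA sB (prY ν)

/-- `({a^{x_A}}, {b^{x_B}}, r)` is a solution of the agreement system:
probability vectors, `r` strictly positive, with
`Σ_y a^{x_A}(y)·b^{x_B}(y)/r(y) = K(x_A,x_B)` for all `x_A, x_B`. -/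
def AgreementSolution [Fintype SA] [Fintype SB] [Fintype S] (ν : SA → SB → S → ℝ)
    (a : SA → S → ℝ) (b : SB → S → ℝ) (r : S → ℝ) : Prop :=
  (∀ xa, IsProbVec (a xa)) ∧ (∀ xb, IsProbVec (b xb)) ∧ IsProbVec r ∧ (∀ y, 0 < r y) ∧
    ∀ xa xb, (∑ y, a xa y * b xb y / r y) = K ν xa xb

/-- The prior is well-defined: any two solutions of the agreement system coincide
up to a permutation of `Σ`. -/
def WellDefinedPrior [Fintype SA] [Fintype SB] [Fintype S] (ν : SA → SB → S → ℝ) : Prop :=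
  ∀ (a : SA → S → ℝ) (b : SB → S → ℝ) (r : S → ℝ)
    (c : SA → S → ℝ) (d : SB → S → ℝ) (r' : S → ℝ),
    AgreementSolution ν a b r → AgreementSolution ν c d r' →
    ∃ π : Equiv.Perm S, ∀ y, r (π y) = r' y ∧ (∀ xa, a xa (π y) = c xa y)
      ∧ (∀ xb, b xb (π y) = d xb y)

/-- The prior is stable: fixing the truthful `A`-side (resp. `B`-side) of the agreement
system, the only solution for the other side is the truthful one. -/
def StablePrior [Fintype SA] [Fintype SB] [Fintype S] (ν : SA → SB → S → ℝ) : Prop :=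
  (∀ b : SB → S → ℝ, (∀ xb, IsProbVec (b xb)) →
    (∀ xa xb, (∑ y, condA ν xa y * b xb y / prY ν y) = K ν xa xb) →
    ∀ xb y, b xb y = condB ν xb y) ∧
  (∀ a : SA → S → ℝ, (∀ xa, IsProbVec (a xa)) →
    (∀ xa xb, (∑ y, a xa y * condB ν xb y / prY ν y) = K ν xa xb) →
    ∀ xa y, a xa y = condA ν xa y)


lemma tangent_le (f : ℝ → ℝ) (hconv : ConvexOn ℝ Set.univ f) (hdiff : Differentiable ℝ f)
    (t s : ℝ) : f t + deriv f t * (s - t) ≤ f s := by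
  rcases lt_trichotomy t s with h | h | h
  · have h1 := hconv.deriv_le_slope (Set.mem_univ t) (Set.mem_univ s) h (hdiff t)
    rw [slope_def_field] at h1
    have h2 : (0:ℝ) < s - t := sub_pos.mpr h
    rw [le_div_iff₀ h2] at h1
    nlinarith
  · simp [h]
  · have h1 := hconv.slope_le_deriv (Set.mem_univ s) (Set.mem_univ t) h (hdiff t)
    rw [slope_def_field] at h1
    have h2 : (0:ℝ) < t - s := sub_pos.mpr h
    rw [div_le_iff₀ h2] at h1
    nlinarith

lemma tangent_eq (f : ℝ → ℝ) (hdiff : Differentiable ℝ f)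
    (hinj : Function.Injective (deriv f)) (t s : ℝ)
    (h : f t + deriv f t * (s - t) = f s) : s = t := by
  by_contra hne
  rcases lt_or_gt_of_ne hne with hlt | hgt
  · obtain ⟨c, hc, hc'⟩ := exists_deriv_eq_slope f hlt hdiff.continuous.continuousOn
      (fun x _ => hdiff x |>.differentiableWithinAt)
    have hts : (0:ℝ) < t - s := sub_pos.mpr hlt
    have : deriv f c = deriv f t := by
      rw [hc']; field_simp; nlinarith
    exact absurd (hinj this) (ne_of_lt hc.2)
  · obtain ⟨c, hc, hc'⟩ := exists_deriv_eq_slope f hgt hdiff.continuous.continuousOn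
      (fun x _ => hdiff x |>.differentiableWithinAt)
    have hts : (0:ℝ) < s - t := sub_pos.mpr hgt
    have : deriv f c = deriv f t := by
      rw [hc']; field_simp; nlinarith
    exact absurd (hinj this) (ne_of_gt hc.1)

section helper
variable {SA SB S : Type*}

lemma hdiffsum_aux [Fintype SA] [Fintype SB] [Fintype S]
    (ν : SA → SB → S → ℝ) (hA : ∀ a, 0 < prA ν a) (hB : ∀ b, 0 < prB ν b)
    (f : ℝ → ℝ)
    (hconj : ∀ t : ℝ, fconj f (deriv f t) = t * deriv f t - f t)
    (sA : SA → S → ℝ) (sB : SB → S → ℝ) :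
    ∑ a, ∑ b, prA ν a * prB ν b *
        (f (K ν a b) - f (gagr sA sB (prY ν) a b)
          - deriv f (gagr sA sB (prY ν) a b) * (K ν a b - gagr sA sB (prY ν) a b))
      = MIf f ν - Pay f ν sA sB := by
  have hAB : ∀ a b, jAB ν a b = prA ν a * prB ν b * K ν a b := by
    intro a b
    rw [K, mul_comm, div_mul_cancel₀ _ (mul_pos (hA a) (hB b)).ne']
  have e : ∀ a b, prA ν a * prB ν b *
        (f (K ν a b) - f (gagr sA sB (prY ν) a b)
          - deriv f (gagr sA sB (prY ν) a b) * (K ν a b - gagr sA sB (prY ν) a b))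
      = prA ν a * prB ν b * f (K ν a b)
        - jAB ν a b * deriv f (gagr sA sB (prY ν) a b)
        + prA ν a * prB ν b * fconj f (deriv f (gagr sA sB (prY ν) a b)) := by
    intro a b; rw [hAB, hconj]; ring
  rw [Finset.sum_congr rfl fun a _ => Finset.sum_congr rfl fun b _ => e a b]
  simp only [Finset.sum_add_distrib, Finset.sum_sub_distrib]
  unfold Pay MIG MIf
  ring

end helper

/-- Focality of `MCG(f)`: under conditional independence, a well-defined prior, and a
differentiable convex `f` with injective derivative, any strategy profile attaining
the maximal payment `MI^f(X_A;X_B)` is a permutation strategy profile. -/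
theorem stmt_9 [Fintype SA] [Fintype SB] [Fintype S] [Nonempty SA] [Nonempty SB] [Nonempty S]
    (ν : SA → SB → S → ℝ) (hν : IsPMF ν)
    (hA : ∀ a, 0 < prA ν a) (hB : ∀ b, 0 < prB ν b) (hY : ∀ y, 0 < prY ν y)
    (hci : CondIndep ν) (hwd : WellDefinedPrior ν)
    (f : ℝ → ℝ) (hconv : ConvexOn ℝ Set.univ f) (hdiff : Differentiable ℝ f) (hf1 : f 1 = 0)
    (hconj : ∀ t : ℝ, fconj f (deriv f t) = t * deriv f t - f t)
    (hinj : Function.Injective (deriv f))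
    (sA : SA → S → ℝ) (sB : SB → S → ℝ)
    (hsA : ∀ a, IsProbVec (sA a)) (hsB : ∀ b, IsProbVec (sB b))
    (hmax : Pay f ν sA sB = MIf f ν) :
    ∃ π : Equiv.Perm S, ∀ (a : SA) (b : SB) (y : S),
      prY ν (π y) = prY ν y ∧ sA a (π y) = condA ν a y ∧ sB b (π y) = condB ν b y := by
  classical
  -- Step 1: maximality forces the agreement to equal K pointwise
  have hsum0 : ∑ a, ∑ b, prA ν a * prB ν b *
        (f (K ν a b) - f (gagr sA sB (prY ν) a b)
          - deriv f (gagr sA sB (prY ν) a b) * (K ν a b - gagr sA sB (prY ν) a b)) = 0 := by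
    rw [hdiffsum_aux ν hA hB f hconj sA sB, hmax, sub_self]
  have hnn : ∀ a b, 0 ≤ prA ν a * prB ν b *
        (f (K ν a b) - f (gagr sA sB (prY ν) a b)
          - deriv f (gagr sA sB (prY ν) a b) * (K ν a b - gagr sA sB (prY ν) a b)) := by
    intro a b
    have ht := tangent_le f hconv hdiff (gagr sA sB (prY ν) a b) (K ν a b)
    have := mul_pos (hA a) (hB b)
    nlinarith
  have hz : ∀ a b, prA ν a * prB ν b *
        (f (K ν a b) - f (gagr sA sB (prY ν) a b)
          - deriv f (gagr sA sB (prY ν) a b) * (K ν a b - gagr sA sB (prY ν) a b)) = 0 := by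
    intro a b
    have h1 := (Finset.sum_eq_zero_iff_of_nonneg
        (fun a _ => Finset.sum_nonneg fun b _ => hnn a b)).mp hsum0 a (Finset.mem_univ a)
    exact (Finset.sum_eq_zero_iff_of_nonneg (fun b _ => hnn a b)).mp h1 b (Finset.mem_univ b)
  have hKeq : ∀ a b, K ν a b = gagr sA sB (prY ν) a b := by
    intro a b
    have hpos := mul_pos (hA a) (hB b)
    have h2 : (f (K ν a b) - f (gagr sA sB (prY ν) a b)
        - deriv f (gagr sA sB (prY ν) a b) * (K ν a b - gagr sA sB (prY ν) a b)) = 0 :=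
      (mul_eq_zero.mp (hz a b)).resolve_left hpos.ne'
    exact tangent_eq f hdiff hinj (gagr sA sB (prY ν) a b) (K ν a b) (by linarith)
  have hKg : ∀ a b, (∑ y, sA a y * sB b y / prY ν y) = K ν a b := by
    intro a b; rw [hKeq a b]; rfl
  -- Step 2: conditional independence gives the truthful agreement solution
  have hnu : ∀ a b y, ν a b y * prY ν y = jAY ν a y * jBY ν b y := by
    intro a b y
    have h := hci a b y
    have hy := (hY y).ne'
    field_simp at h
    nlinarith [hY y, h]
  have hKc : ∀ a b, (∑ y, condA ν a y * condB ν b y / prY ν y) = K ν a b := by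
    intro a b
    rw [K, jAB, eq_div_iff (mul_pos (hA a) (hB b)).ne', Finset.sum_mul]
    refine Finset.sum_congr rfl fun y _ => ?_
    rw [condA, condB]
    have hy := (hY y).ne'
    have ha := (hA a).ne'
    have hb := (hB b).ne'
    field_simp
    linear_combination (-1 : ℝ) * hnu a b y
  -- probability vector facts
  have hν0 := hν.1
  have hjAYnn : ∀ a y, 0 ≤ jAY ν a y := fun a y => Finset.sum_nonneg fun b _ => hν0 a b y
  have hjBYnn : ∀ b y, 0 ≤ jBY ν b y := fun b y => Finset.sum_nonneg fun a _ => hν0 a b y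
  have hcondA_pv : ∀ a, IsProbVec (condA ν a) := by
    intro a
    refine ⟨fun y => div_nonneg (hjAYnn a y) (hA a).le, ?_⟩
    unfold condA
    rw [← Finset.sum_div, div_eq_one_iff_eq (hA a).ne']
    unfold jAY prA
    exact Finset.sum_comm
  have hcondB_pv : ∀ b, IsProbVec (condB ν b) := by
    intro b
    refine ⟨fun y => div_nonneg (hjBYnn b y) (hB b).le, ?_⟩
    unfold condB
    rw [← Finset.sum_div, div_eq_one_iff_eq (hB b).ne']
    unfold jBY prB
    exact Finset.sum_comm
  have hprY_pv : IsProbVec (prY ν) := by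
    refine ⟨fun y => (hY y).le, ?_⟩
    calc ∑ y, prY ν y = ∑ y, ∑ a, ∑ b, ν a b y := rfl
      _ = ∑ a, ∑ y, ∑ b, ν a b y := Finset.sum_comm
      _ = ∑ a, ∑ b, ∑ y, ν a b y := Finset.sum_congr rfl fun a _ => Finset.sum_comm
      _ = 1 := hν.2
  have sol1 : AgreementSolution ν sA sB (prY ν) := ⟨hsA, hsB, hprY_pv, hY, hKg⟩
  have sol2 : AgreementSolution ν (condA ν) (condB ν) (prY ν) :=
    ⟨hcondA_pv, hcondB_pv, hprY_pv, hY, hKc⟩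
  obtain ⟨π, hπ⟩ := hwd sA sB (prY ν) (condA ν) (condB ν) (prY ν) sol1 sol2
  exact ⟨π, fun a b y => ⟨(hπ y).1, (hπ y).2.1 a, (hπ y).2.2 b⟩⟩
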